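/- Assume C_HN < C_HA and set κ = (C_L − C_HN)/(C_HA − C_HN). If λNA ≥ κ and τ ∈ [0,1] is a threshold for V, then τ = κ. -/

import Mathlib

/-- Two-state consumer model: transition probabilities `lNA ≤ lAA`, costs
`CHN ≤ CL ≤ CHA`, discount factor `β ∈ (0,1)`. -/
structure CouponModel where
  lNA : ℝ
  lAA : ℝ
  CHN : ℝ
  CL : ℝ
  CHA : ℝ
  β : ℝ
  lNA_nonneg : 0 ≤ lNA
  lNA_le_lAA : lNA ≤ lAA
  lAA_le_one : lAA ≤ 1
  CHN_le_CL : CHN ≤ CL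
  CL_le_CHA : CL ≤ CHA
  β_pos : 0 < β
  β_lt_one : β < 1

namespace CouponModel

/-- Belief-update map `T(p) = (1-p)·λNA + p·λAA`. -/
noncomputable def T (M : CouponModel) (p : ℝ) : ℝ := (1 - p) * M.lNA + p * M.lAA

/-- Bellman operator. -/
noncomputable def B (M : CouponModel) (f : ℝ → ℝ) (p : ℝ) : ℝ :=
  min (M.CL + M.β * f (M.T p))
    ((1 - p) * M.CHN + p * M.CHA + M.β * ((1 - p) * f M.lNA + p * f M.lAA))

/-- A function `f : ℝ → ℝ` is bounded on the belief space `[0,1]`. -/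
def IsBdd (f : ℝ → ℝ) : Prop := ∃ C : ℝ, ∀ p ∈ Set.Icc (0:ℝ) 1, |f p| ≤ C

/-- `V` is a bounded fixed point of the Bellman operator on `[0,1]`. -/
def IsValue (M : CouponModel) (V : ℝ → ℝ) : Prop :=
  IsBdd V ∧ ∀ p ∈ Set.Icc (0:ℝ) 1, V p = M.B V p

/-- Value of offering the low-privacy coupon at belief `p`. -/
noncomputable def LPval (M : CouponModel) (V : ℝ → ℝ) (p : ℝ) : ℝ :=
  M.CL + M.β * V (M.T p)

/-- Value of offering the high-privacy coupon at belief `p`. -/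
noncomputable def HPval (M : CouponModel) (V : ℝ → ℝ) (p : ℝ) : ℝ :=
  (1 - p) * M.CHN + p * M.CHA + M.β * ((1 - p) * V M.lNA + p * V M.lAA)

/-- `τ` is a threshold for `V`: HP is optimal below `τ`, LP is optimal above `τ`. -/
def IsThreshold (M : CouponModel) (V : ℝ → ℝ) (τ : ℝ) : Prop :=
  τ ∈ Set.Icc (0:ℝ) 1 ∧
    (∀ p ∈ Set.Icc (0:ℝ) τ, V p = M.HPval V p) ∧
    (∀ p ∈ Set.Icc τ (1:ℝ), V p = M.LPval V p)

end CouponModel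


namespace CouponModel

/-- The long-run LP value `C_L/(1-β)`. -/
noncomputable def myc (M : CouponModel) : ℝ := M.CL / (1 - M.β)

/-- Candidate value function when `λNA ≥ κ`. -/
noncomputable def myW (M : CouponModel) (p : ℝ) : ℝ :=
  min M.CL ((1 - p) * M.CHN + p * M.CHA) + M.β * M.myc

lemma one_sub_β_pos (M : CouponModel) : 0 < 1 - M.β := by linarith [M.β_lt_one]

lemma myc_eq (M : CouponModel) : M.CL + M.β * M.myc = M.myc := by
  have h := M.one_sub_β_pos
  unfold myc
  field_simp
  ring

lemma T_mem (M : CouponModel) {p : ℝ} (hp : p ∈ Set.Icc (0:ℝ) 1) :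
    M.T p ∈ Set.Icc (0:ℝ) 1 := by
  obtain ⟨h0, h1⟩ := hp
  have h2 := M.lNA_nonneg
  have h3 := M.lNA_le_lAA
  have h4 := M.lAA_le_one
  constructor
  · unfold T; nlinarith
  · unfold T; nlinarith

lemma lNA_le_T (M : CouponModel) {p : ℝ} (hp : 0 ≤ p) : M.lNA ≤ M.T p := by
  have h3 := M.lNA_le_lAA
  unfold T; nlinarith

lemma myW_high (M : CouponModel) (hC : M.CHN < M.CHA) {p : ℝ}
    (hp : (M.CL - M.CHN) / (M.CHA - M.CHN) ≤ p) : M.myW p = M.myc := by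
  have hpos : (0:ℝ) < M.CHA - M.CHN := by linarith
  have h1 : M.CL - M.CHN ≤ p * (M.CHA - M.CHN) := by
    have := (div_le_iff₀ hpos).mp hp
    linarith
  have h2 : M.CL ≤ (1 - p) * M.CHN + p * M.CHA := by nlinarith
  rw [myW, min_eq_left h2, myc_eq]

lemma myW_fixed (M : CouponModel) (hC : M.CHN < M.CHA)
    (hκ : (M.CL - M.CHN) / (M.CHA - M.CHN) ≤ M.lNA) :
    ∀ p ∈ Set.Icc (0:ℝ) 1, M.myW p = M.B M.myW p := by
  intro p hp
  have hT : M.myW (M.T p) = M.myc :=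
    M.myW_high hC (le_trans hκ (M.lNA_le_T hp.1))
  have hN : M.myW M.lNA = M.myc := M.myW_high hC hκ
  have hA : M.myW M.lAA = M.myc := M.myW_high hC (le_trans hκ M.lNA_le_lAA)
  rw [B, hT, hN, hA]
  have e1 : (1 - p) * M.myc + p * M.myc = M.myc := by ring
  rw [e1, myc_eq, myW]
  rw [← min_add_add_right, myc_eq]

lemma value_eq_myW (M : CouponModel) (hC : M.CHN < M.CHA)
    (V : ℝ → ℝ) (hV : M.IsValue V)
    (hκ : (M.CL - M.CHN) / (M.CHA - M.CHN) ≤ M.lNA) :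
    ∀ p ∈ Set.Icc (0:ℝ) 1, V p = M.myW p := by
  obtain ⟨⟨C1, hC1⟩, hfix⟩ := hV
  -- bound for myW on [0,1]
  have hWb : ∀ p ∈ Set.Icc (0:ℝ) 1, |M.myW p| ≤ |M.CL| + |M.CHN| + |M.CHA| + |M.β * M.myc| := by
    intro p hp
    obtain ⟨h0, h1⟩ := hp
    rw [myW]
    rcases le_total M.CL ((1 - p) * M.CHN + p * M.CHA) with h | h
    · rw [min_eq_left h]
      calc |M.CL + M.β * M.myc| ≤ |M.CL| + |M.β * M.myc| := abs_add_le _ _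
        _ ≤ _ := by linarith [abs_nonneg M.CHN, abs_nonneg M.CHA]
    · rw [min_eq_right h]
      have hl : |(1 - p) * M.CHN + p * M.CHA| ≤ |M.CHN| + |M.CHA| := by
        calc |(1 - p) * M.CHN + p * M.CHA| ≤ |(1 - p) * M.CHN| + |p * M.CHA| := abs_add_le _ _
          _ = (1 - p) * |M.CHN| + p * |M.CHA| := by
              rw [abs_mul, abs_mul, abs_of_nonneg (by linarith : (0:ℝ) ≤ 1 - p),
                abs_of_nonneg h0]
          _ ≤ |M.CHN| + |M.CHA| := by nlinarith [abs_nonneg M.CHN, abs_nonneg M.CHA]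
      calc |(1 - p) * M.CHN + p * M.CHA + M.β * M.myc|
          ≤ |(1 - p) * M.CHN + p * M.CHA| + |M.β * M.myc| := abs_add_le _ _
        _ ≤ _ := by have := abs_nonneg M.CL; linarith
  set g : ℝ → ℝ := fun p => |V p - M.myW p| with hg
  set s : Set ℝ := g '' Set.Icc (0:ℝ) 1 with hs
  have hne : s.Nonempty := ⟨g 0, 0, ⟨le_refl 0, zero_le_one⟩, rfl⟩
  have hbdd : BddAbove s := by
    refine ⟨C1 + (|M.CL| + |M.CHN| + |M.CHA| + |M.β * M.myc|), ?_⟩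
    rintro x ⟨p, hp, rfl⟩
    calc g p ≤ |V p| + |M.myW p| := abs_sub _ _
      _ ≤ _ := add_le_add (hC1 p hp) (hWb p hp)
  set S : ℝ := sSup s with hS
  have hle : ∀ p ∈ Set.Icc (0:ℝ) 1, g p ≤ S := fun p hp => le_csSup hbdd ⟨p, hp, rfl⟩
  have hkey : ∀ p ∈ Set.Icc (0:ℝ) 1, g p ≤ M.β * S := by
    intro p hp
    obtain ⟨h0, h1⟩ := hp
    have hβ := M.β_pos
    have hgp : g p = |M.B V p - M.B M.myW p| := by
      rw [hg]
      simp only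
      rw [hfix p ⟨h0, h1⟩, M.myW_fixed hC hκ p ⟨h0, h1⟩]
    rw [hgp, B, B]
    refine le_trans (abs_min_sub_min_le_max _ _ _ _) (max_le ?_ ?_)
    · have e : M.CL + M.β * V (M.T p) - (M.CL + M.β * M.myW (M.T p))
          = M.β * (V (M.T p) - M.myW (M.T p)) := by ring
      rw [e, abs_mul, abs_of_nonneg hβ.le]
      exact mul_le_mul_of_nonneg_left (hle _ (M.T_mem ⟨h0, h1⟩)) hβ.le
    · have hNA : M.lNA ∈ Set.Icc (0:ℝ) 1 :=
        ⟨M.lNA_nonneg, le_trans M.lNA_le_lAA M.lAA_le_one⟩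
      have hAA : M.lAA ∈ Set.Icc (0:ℝ) 1 :=
        ⟨le_trans M.lNA_nonneg M.lNA_le_lAA, M.lAA_le_one⟩
      have e : (1 - p) * M.CHN + p * M.CHA + M.β * ((1 - p) * V M.lNA + p * V M.lAA)
          - ((1 - p) * M.CHN + p * M.CHA + M.β * ((1 - p) * M.myW M.lNA + p * M.myW M.lAA))
          = M.β * ((1 - p) * (V M.lNA - M.myW M.lNA) + p * (V M.lAA - M.myW M.lAA)) := by
        ring
      rw [e, abs_mul, abs_of_nonneg hβ.le]
      have h2 : |(1 - p) * (V M.lNA - M.myW M.lNA) + p * (V M.lAA - M.myW M.lAA)| ≤ S := by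
        calc |(1 - p) * (V M.lNA - M.myW M.lNA) + p * (V M.lAA - M.myW M.lAA)|
            ≤ |(1 - p) * (V M.lNA - M.myW M.lNA)| + |p * (V M.lAA - M.myW M.lAA)| :=
              abs_add_le _ _
          _ = (1 - p) * g M.lNA + p * g M.lAA := by
              rw [abs_mul, abs_mul, abs_of_nonneg (by linarith : (0:ℝ) ≤ 1 - p),
                abs_of_nonneg h0]
          _ ≤ (1 - p) * S + p * S := by
              have := hle _ hNA
              have := hle _ hAA
              nlinarith
          _ = S := by ring
      exact mul_le_mul_of_nonneg_left h2 hβ.le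
  have hSle : S ≤ M.β * S := csSup_le hne (by rintro x ⟨p, hp, rfl⟩; exact hkey p hp)
  have hS0 : 0 ≤ S := le_trans (abs_nonneg _) (hle 0 ⟨le_refl 0, zero_le_one⟩)
  have hSz : S ≤ 0 := by nlinarith [M.β_lt_one]
  intro p hp
  have h := hkey p hp
  have : |V p - M.myW p| ≤ 0 := by
    have := mul_nonpos_of_nonneg_of_nonpos M.β_pos.le hSz
    calc |V p - M.myW p| = g p := rfl
      _ ≤ M.β * S := h
      _ ≤ 0 := this
  have := abs_nonneg (V p - M.myW p)
  have hz : |V p - M.myW p| = 0 := le_antisymm ‹|V p - M.myW p| ≤ 0› this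
  have := abs_eq_zero.mp hz
  linarith [this]

end CouponModel

/-- If `λNA ≥ κ = (C_L - C_HN)/(C_HA - C_HN)` and `τ` is a threshold for `V`,
then `τ = κ`. -/
theorem threshold_eq_kappa (M : CouponModel) (hC : M.CHN < M.CHA)
    (V : ℝ → ℝ) (hV : M.IsValue V)
    (hκ : (M.CL - M.CHN) / (M.CHA - M.CHN) ≤ M.lNA)
    (τ : ℝ) (hτ : M.IsThreshold V τ) :
    τ = (M.CL - M.CHN) / (M.CHA - M.CHN) := by
  obtain ⟨hτmem, hHP, hLP⟩ := hτ
  have hVW := M.value_eq_myW hC V hV hκ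
  have hNA : M.lNA ∈ Set.Icc (0:ℝ) 1 :=
    ⟨M.lNA_nonneg, le_trans M.lNA_le_lAA M.lAA_le_one⟩
  have hAA : M.lAA ∈ Set.Icc (0:ℝ) 1 :=
    ⟨le_trans M.lNA_nonneg M.lNA_le_lAA, M.lAA_le_one⟩
  have hVNA : V M.lNA = M.myc := by rw [hVW _ hNA, M.myW_high hC hκ]
  have hVAA : V M.lAA = M.myc := by
    rw [hVW _ hAA, M.myW_high hC (le_trans hκ M.lNA_le_lAA)]
  have hVT : V (M.T τ) = M.myc := by
    rw [hVW _ (M.T_mem hτmem), M.myW_high hC (le_trans hκ (M.lNA_le_T hτmem.1))]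
  have hpos : (0:ℝ) < M.CHA - M.CHN := by linarith
  have hτW : V τ = min M.CL ((1 - τ) * M.CHN + τ * M.CHA) + M.β * M.myc := hVW τ hτmem
  -- τ ≤ κ from the HP condition at p = τ
  have h1 : V τ = M.HPval V τ := hHP τ ⟨hτmem.1, le_refl τ⟩
  have h2 : V τ = M.LPval V τ := hLP τ ⟨le_refl τ, hτmem.2⟩
  rw [CouponModel.HPval, hVNA, hVAA] at h1
  rw [CouponModel.LPval, hVT] at h2
  have e1 : (1 - τ) * M.myc + τ * M.myc = M.myc := by ring
  rw [e1] at h1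
  rw [hτW] at h1 h2
  have hle1 : min M.CL ((1 - τ) * M.CHN + τ * M.CHA) = (1 - τ) * M.CHN + τ * M.CHA := by
    linarith
  have hle2 : min M.CL ((1 - τ) * M.CHN + τ * M.CHA) = M.CL := by linarith
  have hℓ : (1 - τ) * M.CHN + τ * M.CHA = M.CL := by
    have := min_le_left M.CL ((1 - τ) * M.CHN + τ * M.CHA)
    have := min_le_right M.CL ((1 - τ) * M.CHN + τ * M.CHA)
    linarith
  rw [eq_div_iff (ne_of_gt hpos)]
  linarith [hℓ]
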